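/- Let A be a (possibly non-commutative) associative unital ring and p a prime. Then the closure of [X(A),X(A)] in A^{ℕ₀} equals the closed additive subgroup of X(A) generated by the set { p^m·V^n([⟨a₁⟩⋯⟨a_s⟩, ⟨b₁^{p^{n−m}}⟩⋯⟨b_t^{p^{n−m}}⟩]) : m,n ∈ ℕ₀, m ≤ n, s,t ≥ 1, a_i, b_j ∈ A }, where [x,y] := xy − yx. -/

import Mathlib

/-- Verschiebung operator: `V(a₀,a₁,...) = p·(0,a₀,a₁,...)`. -/
def Vb (p : ℕ) {A : Type*} [Ring A] (a : ℕ → A) : ℕ → A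
  | 0 => 0
  | n + 1 => (p : A) * a n

/-- Teichmüller element: `⟨a⟩ = (a, a^p, a^{p²}, ...)`. -/
def tm (p : ℕ) {A : Type*} [Ring A] (a : A) : ℕ → A := fun n => a ^ p ^ n

/-- Generators of `X(A)`: all `V^m(⟨a₁⟩⋯⟨a_r⟩)` with `m ∈ ℕ₀`, `r ≥ 1`, `aᵢ ∈ A`. -/
def XAgen (p : ℕ) (A : Type*) [Ring A] : Set (ℕ → A) :=
  {x | ∃ (m : ℕ) (l : List A), l ≠ [] ∧ x = (Vb p)^[m] ((l.map (tm p)).prod)}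

/-- `X(A)`: the topological closure of the additive subgroup generated by `XAgen`. -/
noncomputable def XA (p : ℕ) (A : Type*) [Ring A] [TopologicalSpace A] [DiscreteTopology A] :
    AddSubgroup (ℕ → A) :=
  (AddSubgroup.closure (XAgen p A)).topologicalClosure

/-- The set of commutators `xy − yx` with `x, y ∈ X(A)`. -/
def commXA (p : ℕ) (A : Type*) [Ring A] [TopologicalSpace A] [DiscreteTopology A] :
    Set (ℕ → A) :=
  {z | ∃ x ∈ XA p A, ∃ y ∈ XA p A, z = x * y - y * x}

/-- The set `{ p^m·V^n([⟨a₁⟩⋯⟨a_s⟩, ⟨b₁^{p^{n−m}}⟩⋯⟨b_t^{p^{n−m}}⟩]) :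
m ≤ n, s,t ≥ 1, aᵢ, bⱼ ∈ A }`. -/
def commGen (p : ℕ) (A : Type*) [Ring A] : Set (ℕ → A) :=
  {z | ∃ m n : ℕ, m ≤ n ∧ ∃ as bs : List A, as ≠ [] ∧ bs ≠ [] ∧
    z = p ^ m •
      (Vb p)^[n]
        ((as.map (tm p)).prod * (bs.map (fun b => tm p (b ^ p ^ (n - m)))).prod
          - (bs.map (fun b => tm p (b ^ p ^ (n - m)))).prod * (as.map (tm p)).prod)}

section aux
variable {A : Type*} [Ring A] (p : ℕ)

/-- shift by j -/
def shf (j : ℕ) (x : ℕ → A) : ℕ → A := fun n => x (n + j)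

lemma Vb_sub (x y : ℕ → A) : Vb p (x - y) = Vb p x - Vb p y := by
  funext n; cases n <;> simp [Vb, mul_sub]

lemma Vb_iter_sub (k : ℕ) (x y : ℕ → A) :
    (Vb p)^[k] (x - y) = (Vb p)^[k] x - (Vb p)^[k] y := by
  induction k generalizing x y with
  | zero => simp
  | succ k ih => rw [Function.iterate_succ_apply, Vb_sub, ih, Function.iterate_succ_apply,
      Function.iterate_succ_apply]

lemma Vb_smul (c : ℕ) (x : ℕ → A) : Vb p (c • x) = c • Vb p x := by
  funext n
  cases n with
  | zero => simp [Vb]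
  | succ n =>
    show (p : A) * (c • x n) = c • ((p : A) * x n)
    rw [mul_smul_comm]

lemma Vb_mul_Vb (x y : ℕ → A) : Vb p x * Vb p y = p • Vb p (x * y) := by
  funext n
  cases n with
  | zero => simp [Vb]
  | succ n =>
    show (p : A) * x n * ((p : A) * y n) = p • ((p : A) * (x n * y n))
    simp only [← nsmul_eq_mul, smul_mul_assoc, mul_smul_comm]

lemma mul_Vb (x y : ℕ → A) : x * Vb p y = Vb p (shf 1 x * y) := by
  funext n
  cases n with
  | zero => simp [Vb]
  | succ n =>
    show x (n + 1) * ((p : A) * y n) = (p : A) * (x (n + 1) * y n)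
    simp only [← nsmul_eq_mul, mul_smul_comm]

lemma Vb_mul (x y : ℕ → A) : Vb p y * x = Vb p (y * shf 1 x) := by
  funext n
  cases n with
  | zero => simp [Vb]
  | succ n => exact mul_assoc _ _ _

lemma mul_Vb_iter (j : ℕ) (x y : ℕ → A) :
    x * (Vb p)^[j] y = (Vb p)^[j] (shf j x * y) := by
  induction j generalizing x y with
  | zero => rfl
  | succ j ih =>
    rw [Function.iterate_succ_apply' (Vb p) j y, mul_Vb, ih,
      Function.iterate_succ_apply' (Vb p) j (shf (j + 1) x * y)]
    rfl

lemma Vb_iter_mul (j : ℕ) (x y : ℕ → A) :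
    (Vb p)^[j] y * x = (Vb p)^[j] (y * shf j x) := by
  induction j generalizing x y with
  | zero => rfl
  | succ j ih =>
    rw [Function.iterate_succ_apply' (Vb p) j y, Vb_mul, ih,
      Function.iterate_succ_apply' (Vb p) j (y * shf (j + 1) x)]
    rfl

lemma Vb_iter_mul_iter (n : ℕ) (x y : ℕ → A) :
    (Vb p)^[n] x * (Vb p)^[n] y = p ^ n • (Vb p)^[n] (x * y) := by
  induction n generalizing x y with
  | zero => simp
  | succ n ih =>
    rw [Function.iterate_succ_apply' (Vb p) n x, Function.iterate_succ_apply' (Vb p) n y,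
      Vb_mul_Vb, ih, Vb_smul, Function.iterate_succ_apply' (Vb p) n (x * y), smul_smul,
      ← pow_succ']

lemma shf_tm (j : ℕ) (a : A) : shf j (tm p a) = tm p (a ^ p ^ j) := by
  funext n
  show a ^ p ^ (n + j) = (a ^ p ^ j) ^ p ^ n
  rw [← pow_mul, ← pow_add, Nat.add_comm]

lemma shf_prod (j : ℕ) (l : List A) :
    shf j ((l.map (tm p)).prod) = (l.map (fun a => tm p (a ^ p ^ j))).prod := by
  induction l with
  | nil => rfl
  | cons a l ih =>
    simp only [List.map_cons, List.prod_cons]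
    have : shf j (tm p a * (l.map (tm p)).prod)
        = shf j (tm p a) * shf j ((l.map (tm p)).prod) := rfl
    rw [this, ih, shf_tm]

lemma key_comm (m j : ℕ) (x y : ℕ → A) :
    (Vb p)^[m + j] x * (Vb p)^[m] y - (Vb p)^[m] y * (Vb p)^[m + j] x
      = p ^ m • (Vb p)^[m + j] (x * shf j y - shf j y * x) := by
  have h1 : (Vb p)^[m + j] x * (Vb p)^[m] y
      = p ^ m • (Vb p)^[m + j] (x * shf j y) := by
    rw [Function.iterate_add_apply, Vb_iter_mul_iter, Vb_iter_mul, ← Function.iterate_add_apply]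
  have h2 : (Vb p)^[m] y * (Vb p)^[m + j] x
      = p ^ m • (Vb p)^[m + j] (shf j y * x) := by
    rw [Function.iterate_add_apply, Vb_iter_mul_iter, mul_Vb_iter, ← Function.iterate_add_apply]
  rw [h1, h2, ← smul_sub, ← Vb_iter_sub]

lemma commGen_elem_eq (m n : ℕ) (h : m ≤ n) (as bs : List A) :
    (Vb p)^[n] ((as.map (tm p)).prod) * (Vb p)^[m] ((bs.map (tm p)).prod)
      - (Vb p)^[m] ((bs.map (tm p)).prod) * (Vb p)^[n] ((as.map (tm p)).prod)
    = p ^ m •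
      (Vb p)^[n]
        ((as.map (tm p)).prod * (bs.map (fun b => tm p (b ^ p ^ (n - m)))).prod
          - (bs.map (fun b => tm p (b ^ p ^ (n - m)))).prod * (as.map (tm p)).prod) := by
  obtain ⟨j, rfl⟩ := Nat.exists_eq_add_of_le h
  rw [Nat.add_sub_cancel_left, ← shf_prod]
  exact key_comm p m j _ _

end aux

/-- the closure of `[X(A),X(A)]` in `A^{ℕ₀}` equals the closed additive
subgroup generated by `commGen`. -/
theorem stmt2 (p : ℕ) (hp : p.Prime) (A : Type*) [Ring A]
    [TopologicalSpace A] [DiscreteTopology A] :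
    closure ((AddSubgroup.closure (commXA p A) : AddSubgroup (ℕ → A)) : Set (ℕ → A))
      = closure ((AddSubgroup.closure (commGen p A) : AddSubgroup (ℕ → A)) : Set (ℕ → A)) := by
  have hXgen : XAgen p A ⊆ (XA p A : Set (ℕ → A)) := fun x hx =>
    subset_closure (AddSubgroup.subset_closure hx)
  -- commGen ⊆ commXA
  have hsub : commGen p A ⊆ commXA p A := by
    rintro z ⟨m, n, hmn, as, bs, ha, hb, rfl⟩
    exact ⟨(Vb p)^[n] ((as.map (tm p)).prod), hXgen ⟨n, as, ha, rfl⟩,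
      (Vb p)^[m] ((bs.map (tm p)).prod), hXgen ⟨m, bs, hb, rfl⟩,
      (commGen_elem_eq p m n hmn as bs).symm⟩
  set C := (AddSubgroup.closure (commGen p A)).topologicalClosure with hCdef
  have hCclosed : IsClosed (C : Set (ℕ → A)) := AddSubgroup.isClosed_topologicalClosure _
  have hCcoe : (C : Set (ℕ → A)) = closure ((AddSubgroup.closure (commGen p A) :
      AddSubgroup (ℕ → A)) : Set (ℕ → A)) := rfl
  have hGC : commGen p A ⊆ (C : Set (ℕ → A)) := fun z hz =>
    subset_closure (AddSubgroup.subset_closure hz)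
  -- commutators of generators are in C
  have hgen : ∀ u ∈ XAgen p A, ∀ v ∈ XAgen p A, u * v - v * u ∈ C := by
    rintro _ ⟨m₁, as, ha, rfl⟩ _ ⟨m₂, bs, hb, rfl⟩
    rcases le_total m₂ m₁ with h | h
    · exact hGC ⟨m₂, m₁, h, as, bs, ha, hb, commGen_elem_eq p m₂ m₁ h as bs⟩
    · have : (Vb p)^[m₂] ((bs.map (tm p)).prod) * (Vb p)^[m₁] ((as.map (tm p)).prod)
          - (Vb p)^[m₁] ((as.map (tm p)).prod) * (Vb p)^[m₂] ((bs.map (tm p)).prod) ∈ C :=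
        hGC ⟨m₁, m₂, h, bs, as, hb, ha, commGen_elem_eq p m₁ m₂ h bs as⟩
      have := neg_mem this
      rwa [neg_sub] at this
  -- extend by biadditivity to the generated subgroup
  have hsubgrp : ∀ u ∈ AddSubgroup.closure (XAgen p A),
      ∀ v ∈ AddSubgroup.closure (XAgen p A), u * v - v * u ∈ C := by
    intro u hu
    induction hu using AddSubgroup.closure_induction with
    | mem u hu =>
      intro v hv
      induction hv using AddSubgroup.closure_induction with
      | mem v hv => exact hgen u hu v hv
      | zero => simpa using zero_mem C
      | add v w hv hw ihv ihw =>
        have : u * (v + w) - (v + w) * u = (u * v - v * u) + (u * w - w * u) := by noncomm_ring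
        rw [this]; exact add_mem ihv ihw
      | neg v hv ihv =>
        have : u * (-v) - (-v) * u = -(u * v - v * u) := by noncomm_ring
        rw [this]; exact neg_mem ihv
    | zero => intro v hv; simpa using zero_mem C
    | add u w hu hw ihu ihw =>
      intro v hv
      have : (u + w) * v - v * (u + w) = (u * v - v * u) + (w * v - v * w) := by noncomm_ring
      rw [this]; exact add_mem (ihu v hv) (ihw v hv)
    | neg u hu ihu =>
      intro v hv
      have : (-u) * v - v * (-u) = -(u * v - v * u) := by noncomm_ring
      rw [this]; exact neg_mem (ihu v hv)
  -- extend by continuity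
  have hstep1 : ∀ u ∈ AddSubgroup.closure (XAgen p A), ∀ v ∈ XA p A,
      u * v - v * u ∈ C := by
    intro u hu v hv
    have hcont : Continuous fun v : ℕ → A => u * v - v * u :=
      (continuous_const.mul continuous_id).sub (continuous_id.mul continuous_const)
    have hclosed : IsClosed {v : ℕ → A | u * v - v * u ∈ C} :=
      hCclosed.preimage hcont
    have hsubset : ((AddSubgroup.closure (XAgen p A) : AddSubgroup (ℕ → A)) : Set (ℕ → A))
        ⊆ {v : ℕ → A | u * v - v * u ∈ C} := fun v hv => hsubgrp u hu v hv
    exact closure_minimal hsubset hclosed hv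
  have hstep2 : ∀ v ∈ XA p A, ∀ u ∈ XA p A, u * v - v * u ∈ C := by
    intro v hv u hu
    have hcont : Continuous fun u : ℕ → A => u * v - v * u :=
      (continuous_id.mul continuous_const).sub (continuous_const.mul continuous_id)
    have hclosed : IsClosed {u : ℕ → A | u * v - v * u ∈ C} :=
      hCclosed.preimage hcont
    have hsubset : ((AddSubgroup.closure (XAgen p A) : AddSubgroup (ℕ → A)) : Set (ℕ → A))
        ⊆ {u : ℕ → A | u * v - v * u ∈ C} := fun u hu => hstep1 u hu v hv
    exact closure_minimal hsubset hclosed hu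
  have hcomm : commXA p A ⊆ (C : Set (ℕ → A)) := by
    rintro z ⟨x, hx, y, hy, rfl⟩
    exact hstep2 y hy x hx
  refine Set.Subset.antisymm ?_ ?_
  · refine closure_minimal ?_ hCclosed
    exact (AddSubgroup.closure_le C).mpr hcomm
  · exact closure_mono fun x hx => AddSubgroup.closure_mono hsub hx
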